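/- Let μ ∈ ℝ and σ > 0. If Q is a Borel probability measure on ℝ with mean exactly μ, variance exactly σ², and symmetric about μ (i.e. Q((-∞, μ−x]) = Q([μ+x, ∞)) for all x ∈ ℝ), then ∫ 2((x−μ)₊)² dQ(x) = σ². Consequently sup_{Q∈H_S(μ,σ)} ∫ 2((x−μ)₊)²/σ² dQ(x) = 1, i.e. E(x) = 2((x−μ)₊)²/σ² is a precise e-variable for H_S(μ,σ). -/

import Mathlib

open MeasureTheory Set
open scoped ENNReal

/-- Mean of a distribution on ℝ. -/
noncomputable def distMean (Q : Measure ℝ) : ℝ := ∫ x, x ∂Q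

/-- Variance of a distribution on ℝ. -/
noncomputable def distVar (Q : Measure ℝ) : ℝ := ∫ x, (x - distMean Q)^2 ∂Q

/-- `H(μ,σ)`: Borel probability measures on ℝ with finite second moment,
mean at most `μ`, and variance at most `σ²`. -/
def MemH (μ σ : ℝ) (Q : Measure ℝ) : Prop :=
  IsProbabilityMeasure Q ∧ Integrable (fun x => x^2) Q ∧
    distMean Q ≤ μ ∧ distVar Q ≤ σ^2

/-- A distribution `Q` with mean `m` is symmetric if
`Q((-∞, m−x]) = Q([m+x, ∞))` for all `x`. -/
def IsSymmetricDist (Q : Measure ℝ) : Prop :=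
  ∀ x : ℝ, Q (Iic (distMean Q - x)) = Q (Ici (distMean Q + x))

/- ### Auxiliary lemmas -/

lemma aux_int_x (Q : Measure ℝ) [IsProbabilityMeasure Q]
    (hint : Integrable (fun x => x^2) Q) : Integrable (fun x : ℝ => x) Q := by
  refine (hint.add (integrable_const 1)).mono' measurable_id.aestronglyMeasurable ?_
  filter_upwards with x
  simp only [Pi.add_apply, Real.norm_eq_abs]
  nlinarith [sq_nonneg (|x| - 1), abs_nonneg x, sq_abs x]

lemma aux_int_sub_sq (Q : Measure ℝ) [IsProbabilityMeasure Q]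
    (hint : Integrable (fun x => x^2) Q) (c : ℝ) :
    Integrable (fun x : ℝ => (x - c)^2) Q := by
  have h : (fun x : ℝ => (x - c)^2) = fun x => x^2 - (2*c)*x + c^2 := by
    funext x; ring
  rw [h]
  exact (hint.sub ((aux_int_x Q hint).const_mul _)).add (integrable_const _)

lemma aux_int_max_sq (Q : Measure ℝ) [IsProbabilityMeasure Q]
    (hint : Integrable (fun x => x^2) Q) (c : ℝ) :
    Integrable (fun x : ℝ => (max (x - c) 0)^2) Q := by
  refine (aux_int_sub_sq Q hint c).mono'
    (Continuous.aestronglyMeasurable (by continuity)) ?_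
  filter_upwards with x
  rw [Real.norm_eq_abs, abs_of_nonneg (by positivity)]
  rcases le_total (x - c) 0 with h | h
  · rw [max_eq_right h]; simpa using sq_nonneg (x - c)
  · rw [max_eq_left h]

lemma aux_int_max_sq' (Q : Measure ℝ) [IsProbabilityMeasure Q]
    (hint : Integrable (fun x => x^2) Q) (c : ℝ) :
    Integrable (fun x : ℝ => (max (c - x) 0)^2) Q := by
  refine (aux_int_sub_sq Q hint c).mono'
    (Continuous.aestronglyMeasurable (by continuity)) ?_
  filter_upwards with x
  rw [Real.norm_eq_abs, abs_of_nonneg (by positivity)]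
  rcases le_total (c - x) 0 with h | h
  · rw [max_eq_right h]; simpa using sq_nonneg (x - c)
  · rw [max_eq_left h]; nlinarith

/-- Key lemma: for a symmetric probability measure with finite second moment,
`∫ 2((x−m)₊)² dQ = Var(Q)` where `m` is the mean. -/
lemma key_lemma (Q : Measure ℝ) (hP : IsProbabilityMeasure Q)
    (hint : Integrable (fun x => x^2) Q)
    (hsym : ∀ x : ℝ, Q (Iic (distMean Q - x)) = Q (Ici (distMean Q + x))) :
    ∫ x, 2 * (max (x - distMean Q) 0)^2 ∂Q = distVar Q := by
  set m := distMean Q with hm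
  have hmap : Measure.map (fun x : ℝ => 2*m - x) Q = Q := by
    refine Measure.ext_of_Iic _ _ (fun a => ?_)
    rw [Measure.map_apply (by fun_prop) measurableSet_Iic]
    have hpre : (fun x : ℝ => 2*m - x) ⁻¹' Iic a = Ici (2*m - a) := by
      ext x
      simp only [mem_preimage, mem_Iic, mem_Ici]
      constructor <;> intro h <;> linarith
    rw [hpre]
    have h := hsym (m - a)
    have e1 : m - (m - a) = a := by ring
    have e2 : m + (m - a) = 2*m - a := by ring
    rw [e1, e2] at h
    exact h.symm
  have hg : Integrable (fun x : ℝ => (max (x - m) 0)^2) Q := aux_int_max_sq Q hint m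
  have hg' : Integrable (fun x : ℝ => (max (m - x) 0)^2) Q := aux_int_max_sq' Q hint m
  have hchg : ∫ x, (max (x - m) 0)^2 ∂Q = ∫ x, (max (m - x) 0)^2 ∂Q := by
    conv_lhs => rw [← hmap]
    rw [integral_map (by fun_prop)
      (Continuous.aestronglyMeasurable (by continuity))]
    congr 1
    funext x
    congr 2
    ring
  calc ∫ x, 2 * (max (x - m) 0)^2 ∂Q
      = 2 * ∫ x, (max (x - m) 0)^2 ∂Q := integral_const_mul 2 _
    _ = ∫ x, (max (x - m) 0)^2 ∂Q + ∫ x, (max (m - x) 0)^2 ∂Q := by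
        rw [two_mul, hchg]
    _ = ∫ x, ((max (x - m) 0)^2 + (max (m - x) 0)^2) ∂Q := (integral_add hg hg').symm
    _ = ∫ x, (x - m)^2 ∂Q := by
        congr 1
        funext x
        rcases le_total x m with h | h
        · rw [max_eq_right (by linarith), max_eq_left (by linarith)]; ring
        · rw [max_eq_left (by linarith), max_eq_right (by linarith)]; ring
    _ = distVar Q := rfl

lemma integrable_dirac'' (f : ℝ → ℝ) (hf : Measurable f) (a : ℝ) :
    Integrable f (Measure.dirac a) := by
  refine ⟨hf.aestronglyMeasurable, ?_⟩
  simp [HasFiniteIntegral, lintegral_dirac]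

lemma integral_two_point (f : ℝ → ℝ) (hf : Measurable f) (a b : ℝ) :
    ∫ x, f x ∂((2 : ℝ≥0∞)⁻¹ • (Measure.dirac a + Measure.dirac b)) = (f a + f b) / 2 := by
  rw [integral_smul_measure,
    integral_add_measure (integrable_dirac'' f hf a) (integrable_dirac'' f hf b),
    integral_dirac' f a hf.stronglyMeasurable, integral_dirac' f b hf.stronglyMeasurable]
  simp only [ENNReal.toReal_inv, ENNReal.toReal_ofNat, smul_eq_mul]
  ring

/-- if `Q` has mean exactly `μ`, variance exactly `σ²` and is symmetric
about `μ`, then `∫ 2((x−μ)₊)² dQ = σ²`; consequently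
`sup_{Q ∈ H_S(μ,σ)} ∫ 2((x−μ)₊)²/σ² dQ = 1`, i.e. `E(x) = 2((x−μ)₊)²/σ²`
is a precise e-variable for `H_S(μ,σ)`. -/
theorem stmt_8 (μ σ : ℝ) (hσ : 0 < σ) :
    (∀ Q : Measure ℝ, IsProbabilityMeasure Q → Integrable (fun x => x^2) Q →
      distMean Q = μ → distVar Q = σ^2 →
      (∀ x : ℝ, Q (Iic (μ - x)) = Q (Ici (μ + x))) →
      ∫ x, 2 * (max (x - μ) 0)^2 ∂Q = σ^2) ∧
    IsLUB {r : ℝ | ∃ Q : Measure ℝ, MemH μ σ Q ∧ IsSymmetricDist Q ∧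
      r = ∫ x, 2 * (max (x - μ) 0)^2 / σ^2 ∂Q} 1 := by
  have hσ2 : (0:ℝ) < σ^2 := by positivity
  constructor
  · intro Q hP hmean2 hmean hvar hsym
    subst hmean
    rw [← hvar]
    exact key_lemma Q hP hmean2 hsym
  have hmem : (1:ℝ) ∈ {r : ℝ | ∃ Q : Measure ℝ, MemH μ σ Q ∧ IsSymmetricDist Q ∧
      r = ∫ x, 2 * (max (x - μ) 0)^2 / σ^2 ∂Q} := by
    set Q0 : Measure ℝ := (2 : ℝ≥0∞)⁻¹ • (Measure.dirac (μ - σ) + Measure.dirac (μ + σ))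
      with hQ0
    have hprob : IsProbabilityMeasure Q0 := by
      constructor
      rw [hQ0]
      simp only [Measure.smul_apply, Measure.coe_add, Pi.add_apply,
        Measure.dirac_apply', MeasurableSet.univ, Set.indicator_univ, Pi.one_apply,
        smul_eq_mul]
      rw [one_add_one_eq_two, ENNReal.inv_mul_cancel (by norm_num) (by norm_num)]
    have hmean : distMean Q0 = μ := by
      rw [distMean, hQ0, integral_two_point (fun x => x) measurable_id']
      ring
    have hint : Integrable (fun x : ℝ => x^2) Q0 := by
      rw [hQ0]
      refine Integrable.smul_measure ?_ (by norm_num)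
      exact (integrable_dirac'' _ (by fun_prop) _).add_measure
        (integrable_dirac'' _ (by fun_prop) _)
    have hvar : distVar Q0 = σ^2 := by
      rw [distVar, hmean, hQ0, integral_two_point _ (by fun_prop)]
      ring
    have hsym : IsSymmetricDist Q0 := by
      intro x
      rw [hmean, hQ0]
      classical
      have d : ∀ (a : ℝ) (s : Set ℝ), Measure.dirac a s = if a ∈ s then 1 else 0 := by
        intro a s
        by_cases h : a ∈ s <;> simp [Measure.dirac_apply, h]
      simp only [Measure.smul_apply, Measure.coe_add, Pi.add_apply, d, mem_Iic, mem_Ici]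
      have c1 : (μ - σ ≤ μ - x) = (x ≤ σ) := by
        apply propext; constructor <;> intro h <;> linarith
      have c2 : (μ + σ ≤ μ - x) = (x ≤ -σ) := by
        apply propext; constructor <;> intro h <;> linarith
      have c3 : (μ + x ≤ μ - σ) = (x ≤ -σ) := by
        apply propext; constructor <;> intro h <;> linarith
      have c4 : (μ + x ≤ μ + σ) = (x ≤ σ) := by
        apply propext; constructor <;> intro h <;> linarith
      simp only [c1, c2, c3, c4]
      ring
    refine ⟨Q0, ⟨hprob, hint, le_of_eq hmean, le_of_eq hvar⟩, hsym, ?_⟩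
    rw [hQ0, integral_two_point _ (by measurability)]
    rw [show μ - σ - μ = -σ by ring, show μ + σ - μ = σ by ring,
      max_eq_right (by linarith), max_eq_left hσ.le]
    field_simp
    ring
  have hub : ∀ r ∈ {r : ℝ | ∃ Q : Measure ℝ, MemH μ σ Q ∧ IsSymmetricDist Q ∧
      r = ∫ x, 2 * (max (x - μ) 0)^2 / σ^2 ∂Q}, r ≤ 1 := by
    rintro r ⟨Q, ⟨hP, hint, hmean, hvar⟩, hsymQ, hr⟩
    have key := key_lemma Q hP hint hsymQ
    set m := distMean Q with hm
    have hgm : Integrable (fun x : ℝ => (max (x - m) 0)^2) Q := aux_int_max_sq Q hint m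
    have hgμ : Integrable (fun x : ℝ => (max (x - μ) 0)^2) Q := aux_int_max_sq Q hint μ
    have hmono : ∫ x, 2 * (max (x - μ) 0)^2 ∂Q ≤ ∫ x, 2 * (max (x - m) 0)^2 ∂Q := by
      refine integral_mono (hgμ.const_mul 2) (hgm.const_mul 2) (fun x => ?_)
      have h1 : max (x - μ) 0 ≤ max (x - m) 0 :=
        max_le_max (by linarith) le_rfl
      have h2 : (0:ℝ) ≤ max (x - μ) 0 := le_max_right _ _
      nlinarith
    have hle : ∫ x, 2 * (max (x - μ) 0)^2 ∂Q ≤ σ^2 := by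
      calc ∫ x, 2 * (max (x - μ) 0)^2 ∂Q ≤ ∫ x, 2 * (max (x - m) 0)^2 ∂Q := hmono
        _ = distVar Q := key
        _ ≤ σ^2 := hvar
    rw [hr]
    have heq : ∫ x, 2 * (max (x - μ) 0)^2 / σ^2 ∂Q
        = (∫ x, 2 * (max (x - μ) 0)^2 ∂Q) / σ^2 := integral_div _ _
    rw [heq, div_le_one hσ2]
    exact hle
  exact ⟨fun r hr => hub r hr, fun b hb => hb hmem⟩
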